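/- Fix ρ ∈ (0,1) and d ∈ (0,1) with d ≠ 1−ρ. For each integer m ≥ 1 define δ^{(m)}(d) as follows: δ^{(m)}(d) = 0 if d ≤ (m−1)(1−ρ)/m; δ^{(m)}(d) = (1−ρ−m(1−ρ−d))/(2m(1−ρ−d)) + (1/2)·log(m(1−ρ−d)/(1−ρ)) if (m−1)(1−ρ)/m < d < 1−ρ; and δ^{(m)}(d) = (1−ρ)(1−d)/(2mρ(d−1+ρ)) if 1−ρ < d < 1. Then the sequence m ↦ δ^{(m)}(d) is nonincreasing in m and converges to 0 as m → ∞. -/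

import Mathlib

open Filter

/-- The asymptotic gap `δ^{(m)}(d)` between the Berger–Tung upper bound and the
centralized rate-distortion function. -/
noncomputable def deltaGap (ρ d : ℝ) (m : ℕ) : ℝ :=
  if d ≤ ((m : ℝ) - 1) * (1 - ρ) / (m : ℝ) then 0
  else if d < 1 - ρ then
    (1 - ρ - (m : ℝ) * (1 - ρ - d)) / (2 * (m : ℝ) * (1 - ρ - d)) +
      (1 / 2) * Real.log ((m : ℝ) * (1 - ρ - d) / (1 - ρ))
  else (1 - ρ) * (1 - d) / (2 * (m : ℝ) * ρ * (d - 1 + ρ))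

/-- monotonicity of `g(x) = (1-x)/(2x) + (1/2) log x` on `(0,1]`. -/
lemma gAux {x y : ℝ} (hx : 0 < x) (hxy : x ≤ y) (hy : y ≤ 1) :
    (1 - y) / (2 * y) + (1 / 2) * Real.log y ≤
      (1 - x) / (2 * x) + (1 / 2) * Real.log x := by
  have hy0 : 0 < y := lt_of_lt_of_le hx hxy
  have hlog : Real.log (y / x) ≤ y / x - 1 := Real.log_le_sub_one_of_pos (by positivity)
  rw [Real.log_div hy0.ne' hx.ne'] at hlog
  have h1 : y / x - 1 ≤ (y - x) / (x * y) := by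
    rw [div_sub_one hx.ne', div_le_div_iff₀ hx (by positivity)]
    nlinarith [mul_nonneg (mul_nonneg (sub_nonneg.2 hxy) hx.le) (sub_nonneg.2 hy)]
  have key : Real.log y - Real.log x ≤ (y - x) / (x * y) := le_trans hlog h1
  have h2 : (1 - x) / (2 * x) - (1 - y) / (2 * y) = (y - x) / (x * y) / 2 := by
    field_simp; ring
  linarith

/-- conversion of the middle-branch expression into `g` form. -/
lemma convAux (s t a : ℝ) (hs : 0 < s) (ht : 0 < t) (ha : 0 < a) :
    (s - a * t) / (2 * a * t) = (1 - a * t / s) / (2 * (a * t / s)) := by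
  rw [div_eq_div_iff (by positivity) (by positivity)]
  field_simp

/-- for ρ ∈ (0,1) and `d ∈ (0,1)` with `d ≠ 1-ρ`, the sequence
`m ↦ δ^{(m)}(d)` is nonincreasing on `m ≥ 1` and converges to `0` as `m → ∞`. -/
theorem stmt_19 (ρ d : ℝ) (hρ₁ : 0 < ρ) (hρ₂ : ρ < 1)
    (hd₁ : 0 < d) (hd₂ : d < 1) (hd₃ : d ≠ 1 - ρ) :
    AntitoneOn (deltaGap ρ d) (Set.Ici 1) ∧
    Tendsto (fun m : ℕ => deltaGap ρ d m) atTop (nhds 0) := by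
  have hs : 0 < 1 - ρ := by linarith
  rcases lt_or_gt_of_ne hd₃ with hlt | hgt
  · -- case d < 1 - ρ
    have ht : 0 < 1 - ρ - d := by linarith
    -- the first if-condition, for m ≥ 1
    have hc1 : ∀ m : ℕ, 1 ≤ (m : ℝ) →
        ((d ≤ ((m : ℝ) - 1) * (1 - ρ) / (m : ℝ)) ↔ 1 - ρ ≤ (m : ℝ) * (1 - ρ - d)) := by
      intro m hm
      have hm0 : (0:ℝ) < m := by linarith
      rw [le_div_iff₀ hm0]
      constructor <;> intro h <;> nlinarith
    constructor
    · intro a ha b hb hab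
      have ha1 : 1 ≤ (a : ℝ) := by exact_mod_cast ha
      have hb1 : 1 ≤ (b : ℝ) := by exact_mod_cast hb
      have hab' : (a : ℝ) ≤ b := by exact_mod_cast hab
      have ha0 : (0:ℝ) < a := by linarith
      have hb0 : (0:ℝ) < b := by linarith
      simp only [deltaGap]
      by_cases hcb : d ≤ ((b : ℝ) - 1) * (1 - ρ) / (b : ℝ)
      · rw [if_pos hcb]
        by_cases hca : d ≤ ((a : ℝ) - 1) * (1 - ρ) / (a : ℝ)
        · rw [if_pos hca]
        · rw [if_neg hca, if_pos hlt]
          have hxa : (a : ℝ) * (1 - ρ - d) < 1 - ρ := by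
            by_contra h
            exact hca (((hc1 a ha1).2) (not_lt.1 h))
          have hx1 : (a : ℝ) * (1 - ρ - d) / (1 - ρ) ≤ 1 := by
            rw [div_le_one hs]; linarith
          have hx0 : 0 < (a : ℝ) * (1 - ρ - d) / (1 - ρ) := by positivity
          have := gAux hx0 hx1 le_rfl
          rw [convAux (1 - ρ) (1 - ρ - d) (a : ℝ) hs ht ha0]
          simpa using this
      · rw [if_neg hcb, if_pos hlt]
        have hxb : (b : ℝ) * (1 - ρ - d) < 1 - ρ := by
          by_contra h
          exact hcb (((hc1 b hb1).2) (not_lt.1 h))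
        have hca : ¬ d ≤ ((a : ℝ) - 1) * (1 - ρ) / (a : ℝ) := by
          intro h
          have := (hc1 a ha1).1 h
          have : (a : ℝ) * (1 - ρ - d) ≤ (b : ℝ) * (1 - ρ - d) := by nlinarith
          nlinarith [(hc1 a ha1).1 h]
        rw [if_neg hca, if_pos hlt]
        have hx0 : 0 < (a : ℝ) * (1 - ρ - d) / (1 - ρ) := by positivity
        have hxy : (a : ℝ) * (1 - ρ - d) / (1 - ρ) ≤ (b : ℝ) * (1 - ρ - d) / (1 - ρ) := by
          have : (a : ℝ) * (1 - ρ - d) ≤ (b : ℝ) * (1 - ρ - d) := by nlinarith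
          gcongr
        have hy1 : (b : ℝ) * (1 - ρ - d) / (1 - ρ) ≤ 1 := by
          rw [div_le_one hs]; linarith
        have := gAux hx0 hxy hy1
        rw [convAux (1 - ρ) (1 - ρ - d) (a : ℝ) hs ht ha0,
          convAux (1 - ρ) (1 - ρ - d) (b : ℝ) hs ht hb0]
        exact this
    · -- eventually zero
      have hev : (fun m : ℕ => deltaGap ρ d m) =ᶠ[atTop] (fun _ => (0:ℝ)) := by
        filter_upwards [eventually_ge_atTop (max 1 ⌈(1 - ρ) / (1 - ρ - d)⌉₊)] with m hm
        have hm1 : 1 ≤ (m : ℝ) := by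
          exact_mod_cast le_trans (le_max_left _ _) hm
        have hmc : (1 - ρ) / (1 - ρ - d) ≤ (m : ℝ) :=
          (Nat.ceil_le).1 (le_trans (le_max_right _ _) hm)
        have : 1 - ρ ≤ (m : ℝ) * (1 - ρ - d) := by
          rw [div_le_iff₀ ht] at hmc; linarith
        simp only [deltaGap, if_pos ((hc1 m hm1).2 this)]
      exact Tendsto.congr' hev.symm tendsto_const_nhds
  · -- case d > 1 - ρ
    have ht : 0 < d - 1 + ρ := by linarith
    have hc : ∀ m : ℕ, 1 ≤ (m : ℝ) → deltaGap ρ d m =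
        (1 - ρ) * (1 - d) / (2 * (m : ℝ) * ρ * (d - 1 + ρ)) := by
      intro m hm
      have hm0 : (0:ℝ) < m := by linarith
      have h1 : ¬ d ≤ ((m : ℝ) - 1) * (1 - ρ) / (m : ℝ) := by
        rw [not_le, div_lt_iff₀ hm0]
        nlinarith
      simp only [deltaGap, if_neg h1, if_neg (not_lt.2 hgt.le)]
    constructor
    · intro a ha b hb hab
      have ha1 : 1 ≤ (a : ℝ) := by exact_mod_cast ha
      have hb1 : 1 ≤ (b : ℝ) := by exact_mod_cast hb
      have hab' : (a : ℝ) ≤ b := by exact_mod_cast hab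
      rw [hc a ha1, hc b hb1]
      gcongr
      all_goals nlinarith
    · have h1 : Tendsto (fun m : ℕ =>
          ((1 - ρ) * (1 - d) / (2 * ρ * (d - 1 + ρ))) * ((m : ℝ))⁻¹) atTop (nhds 0) := by
        have h2 : Tendsto (fun m : ℕ => ((m : ℝ))⁻¹) atTop (nhds 0) :=
          tendsto_inv_atTop_zero.comp tendsto_natCast_atTop_atTop
        simpa using h2.const_mul ((1 - ρ) * (1 - d) / (2 * ρ * (d - 1 + ρ)))
      refine h1.congr' ?_
      filter_upwards [eventually_ge_atTop 1] with m hm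
      have hm1 : 1 ≤ (m : ℝ) := by exact_mod_cast hm
      have hm0 : (m : ℝ) ≠ 0 := by positivity
      rw [hc m hm1, mul_comm, inv_mul_eq_div, div_div]
      congr 1
      ring
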